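/- Under the abstract variational framework, let 0 < α ≤ β be constants, let Γ_m ⊆ X be a measurable set, and let γ, γ̃ : X → ℝ be bounded measurable functions with γ ≥ 0 and γ̃ ≥ 0 μ-a.e., satisfying α/4 ≤ γ̃ − γ ≤ α/2 μ-a.e. on Γ_m and α/2 − β ≤ γ̃ − γ ≤ −α/2 μ-a.e. on X∖Γ_m. Let ℓ : V → ℝ be a linear functional and let u, ũ ∈ V be weak solutions for (γ, ℓ) and (γ̃, ℓ) respectively. Then ∫_{Γ_m} (Tu)² dμ − ∫_{X∖Γ_m} (Tu)² dμ ≥ (1/2)∫_{Γ_m} (Tũ)² dμ − (2β/α − 1)∫_{X∖Γ_m} (Tũ)² dμ. (This is the chain of estimates in step (b) of the proof of Theorem 5.2, with γ̃ playing the role of γ^{(km)} and u_{km} = ũ.) -/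

import Mathlib

open MeasureTheory

/-- Chain of estimates from step (b) of the proof of Theorem 5.2: if
`α/4 ≤ γ' − γ ≤ α/2` a.e. on `Γ_m` and `α/2 − β ≤ γ' − γ ≤ −α/2` a.e. on `X∖Γ_m`,
then `∫_{Γ_m} (Tu)² − ∫_{X∖Γ_m} (Tu)² ≥ (1/2)∫_{Γ_m} (Tu')² − (2β/α − 1)∫_{X∖Γ_m} (Tu')²`. -/
theorem quantitative_localized_estimate
    {V : Type*} [AddCommGroup V] [Module ℝ V]
    {X : Type*} [MeasurableSpace X] {μ : Measure X}
    (a : V → V → ℝ)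
    (ha_symm : ∀ v w, a v w = a w v)
    (ha_add : ∀ u v w, a (u + v) w = a u w + a v w)
    (ha_smul : ∀ (c : ℝ) (v w : V), a (c • v) w = c * a v w)
    (ha_nonneg : ∀ v, 0 ≤ a v v)
    (T : V →ₗ[ℝ] (X → ℝ))
    (hT : ∀ v, MemLp (T v) 2 μ)
    (α β : ℝ) (hα : 0 < α) (hαβ : α ≤ β)
    (Γm : Set X) (hΓm : MeasurableSet Γm)
    (γ γ' : X → ℝ)
    (hγm : Measurable γ) (hγ'm : Measurable γ')
    (hγb : ∃ C, ∀ x, |γ x| ≤ C) (hγ'b : ∃ C, ∀ x, |γ' x| ≤ C)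
    (hγ0 : ∀ᵐ x ∂μ, 0 ≤ γ x)
    (hγ'0 : ∀ᵐ x ∂μ, 0 ≤ γ' x)
    (hin : ∀ᵐ x ∂μ, x ∈ Γm → α / 4 ≤ γ' x - γ x ∧ γ' x - γ x ≤ α / 2)
    (hout : ∀ᵐ x ∂μ, x ∉ Γm → α / 2 - β ≤ γ' x - γ x ∧ γ' x - γ x ≤ -(α / 2))
    (ℓ : V →ₗ[ℝ] ℝ)
    (u u' : V)
    (hu : ∀ w, a u w + ∫ x, γ x * T u x * T w x ∂μ = ℓ w)
    (hu' : ∀ w, a u' w + ∫ x, γ' x * T u' x * T w x ∂μ = ℓ w) :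
    (∫ x in Γm, (T u x) ^ 2 ∂μ) - ∫ x in Γmᶜ, (T u x) ^ 2 ∂μ ≥
      (1 / 2) * (∫ x in Γm, (T u' x) ^ 2 ∂μ) -
        (2 * β / α - 1) * ∫ x in Γmᶜ, (T u' x) ^ 2 ∂μ := by
  obtain ⟨C, hC⟩ := hγb
  obtain ⟨C', hC'⟩ := hγ'b
  -- products of traces are integrable
  have hmul : ∀ v w : V, Integrable (fun x => T v x * T w x) μ := by
    intro v w
    have honeeq : (1 : ENNReal) / 1 = 1 / 2 + 1 / 2 := by
      rw [ENNReal.div_add_div_same]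
      norm_num
      exact (ENNReal.div_self (by norm_num) (by norm_num)).symm
    have h : MemLp (T v • T w) 1 μ := (hT w).smul (hT v)
    rw [memLp_one_iff_integrable] at h
    exact h
  -- bounded measurable times products of traces is integrable
  have hint : ∀ (d : X → ℝ), Measurable d → (∃ D, ∀ x, |d x| ≤ D) →
      ∀ v w : V, Integrable (fun x => d x * T v x * T w x) μ := by
    rintro d hd ⟨D, hD⟩ v w
    have h := (hmul v w).bdd_mul hd.aestronglyMeasurable
      (c := D) (Filter.Eventually.of_forall fun x => by simpa [Real.norm_eq_abs] using hD x)
    simpa only [mul_assoc] using h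
  have hδm : Measurable (fun x => γ' x - γ x) := hγ'm.sub hγm
  have hδb : ∃ D, ∀ x, |γ' x - γ x| ≤ D :=
    ⟨C' + C, fun x => (abs_sub _ _).trans (add_le_add (hC' x) (hC x))⟩
  have Iδ : ∀ v w : V, Integrable (fun x => (γ' x - γ x) * T v x * T w x) μ :=
    hint _ hδm hδb
  have Iγ : ∀ v w : V, Integrable (fun x => γ x * T v x * T w x) μ := hint γ hγm ⟨C, hC⟩
  have Iγ' : ∀ v w : V, Integrable (fun x => γ' x * T v x * T w x) μ := hint γ' hγ'm ⟨C', hC'⟩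
  have ha_sub : ∀ v v' w : V, a (v - v') w = a v w - a v' w := by
    intro v v' w
    have h : v - v' = v + (-1 : ℝ) • v' := by
      rw [neg_one_smul]; exact sub_eq_add_neg v v'
    rw [h, ha_add, ha_smul]; ring
  have hTsub : ∀ x, T (u - u') x = T u x - T u' x := by
    intro x; rw [map_sub]; rfl
  -- splitting ∫ δ · Tv · T(u-u')
  have splitδ : ∀ v : V, ∫ x, (γ' x - γ x) * T v x * T (u - u') x ∂μ
      = (∫ x, (γ' x - γ x) * T v x * T u x ∂μ)
        - ∫ x, (γ' x - γ x) * T v x * T u' x ∂μ := by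
    intro v
    rw [← integral_sub (Iδ v u) (Iδ v u')]
    refine integral_congr_ae (Filter.Eventually.of_forall fun x => ?_)
    beta_reduce
    rw [hTsub]; ring
  -- key inequality A : 0 ≤ ∫ δ Tu T(u - u')
  have keyA : 0 ≤ (∫ x, (γ' x - γ x) * T u x * T u x ∂μ)
      - ∫ x, (γ' x - γ x) * T u x * T u' x ∂μ := by
    rw [← splitδ u]
    have hpos : 0 ≤ a (u - u') (u - u') + ∫ x, γ' x * T (u - u') x * T (u - u') x ∂μ := by
      have h1 := ha_nonneg (u - u')
      have h2 : 0 ≤ ∫ x, γ' x * T (u - u') x * T (u - u') x ∂μ :=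
        integral_nonneg_of_ae (hγ'0.mono fun x hx => by
          simp only [Pi.zero_apply]
          rw [mul_assoc]; exact mul_nonneg hx (mul_self_nonneg _))
      linarith
    have e1 : ∫ x, γ' x * T (u - u') x * T (u - u') x ∂μ
        = (∫ x, γ' x * T u x * T (u - u') x ∂μ)
          - ∫ x, γ' x * T u' x * T (u - u') x ∂μ := by
      rw [← integral_sub (Iγ' u (u - u')) (Iγ' u' (u - u'))]
      refine integral_congr_ae (Filter.Eventually.of_forall fun x => ?_)
      beta_reduce
      rw [hTsub]; ring
    have e2 : ∫ x, γ' x * T u x * T (u - u') x ∂μ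
        = (∫ x, γ x * T u x * T (u - u') x ∂μ)
          + ∫ x, (γ' x - γ x) * T u x * T (u - u') x ∂μ := by
      rw [← integral_add (Iγ u (u - u')) (Iδ u (u - u'))]
      refine integral_congr_ae (Filter.Eventually.of_forall fun x => ?_)
      beta_reduce
      ring
    have h3 := hu (u - u')
    have h4 := hu' (u - u')
    have h5 : a (u - u') (u - u') = a u (u - u') - a u' (u - u') := ha_sub u u' (u - u')
    linarith
  -- key inequality B : 0 ≤ ∫ δ Tu' T(u - u')
  have keyB : 0 ≤ (∫ x, (γ' x - γ x) * T u' x * T u x ∂μ)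
      - ∫ x, (γ' x - γ x) * T u' x * T u' x ∂μ := by
    rw [← splitδ u']
    have hpos : 0 ≤ a (u - u') (u - u') + ∫ x, γ x * T (u - u') x * T (u - u') x ∂μ := by
      have h1 := ha_nonneg (u - u')
      have h2 : 0 ≤ ∫ x, γ x * T (u - u') x * T (u - u') x ∂μ :=
        integral_nonneg_of_ae (hγ0.mono fun x hx => by
          simp only [Pi.zero_apply]
          rw [mul_assoc]; exact mul_nonneg hx (mul_self_nonneg _))
      linarith
    have e1 : ∫ x, γ x * T (u - u') x * T (u - u') x ∂μ
        = (∫ x, γ x * T u x * T (u - u') x ∂μ)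
          - ∫ x, γ x * T u' x * T (u - u') x ∂μ := by
      rw [← integral_sub (Iγ u (u - u')) (Iγ u' (u - u'))]
      refine integral_congr_ae (Filter.Eventually.of_forall fun x => ?_)
      beta_reduce
      rw [hTsub]; ring
    have e2 : ∫ x, γ' x * T u' x * T (u - u') x ∂μ
        = (∫ x, γ x * T u' x * T (u - u') x ∂μ)
          + ∫ x, (γ' x - γ x) * T u' x * T (u - u') x ∂μ := by
      rw [← integral_add (Iγ u' (u - u')) (Iδ u' (u - u'))]
      refine integral_congr_ae (Filter.Eventually.of_forall fun x => ?_)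
      beta_reduce
      ring
    have h3 := hu (u - u')
    have h4 := hu' (u - u')
    have h5 : a (u - u') (u - u') = a u (u - u') - a u' (u - u') := ha_sub u u' (u - u')
    linarith
  have hcomm : (∫ x, (γ' x - γ x) * T u x * T u' x ∂μ)
      = ∫ x, (γ' x - γ x) * T u' x * T u x ∂μ :=
    integral_congr_ae (Filter.Eventually.of_forall fun x => by beta_reduce; ring)
  -- monotonicity: ∫ δ (Tu')² ≤ ∫ δ (Tu)²
  have key : (∫ x, (γ' x - γ x) * T u' x * T u' x ∂μ)
      ≤ ∫ x, (γ' x - γ x) * T u x * T u x ∂μ := by linarith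
  -- integrability of δ * squares and squares
  have Iδsq : ∀ v : V, Integrable (fun x => (γ' x - γ x) * (T v x) ^ 2) μ := by
    intro v
    have h := Iδ v v
    simpa only [mul_assoc, ← pow_two] using h
  have Isq : ∀ v : V, Integrable (fun x => (T v x) ^ 2) μ := fun v => (hT v).integrable_sq
  have full_eq : ∀ v : V, ∫ x, (γ' x - γ x) * (T v x) ^ 2 ∂μ
      = ∫ x, (γ' x - γ x) * T v x * T v x ∂μ :=
    fun v => integral_congr_ae (Filter.Eventually.of_forall fun x => by beta_reduce; ring)
  have split : ∀ v : V, (∫ x in Γm, (γ' x - γ x) * (T v x) ^ 2 ∂μ)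
      + ∫ x in Γmᶜ, (γ' x - γ x) * (T v x) ^ 2 ∂μ
      = ∫ x, (γ' x - γ x) * (T v x) ^ 2 ∂μ :=
    fun v => integral_add_compl hΓm (Iδsq v)
  -- pointwise bounds give set-integral bounds
  have hub : ∀ (s : Set X), MeasurableSet s → ∀ (c : ℝ) (v : V),
      (∀ᵐ x ∂μ, x ∈ s → γ' x - γ x ≤ c) →
      ∫ x in s, (γ' x - γ x) * (T v x) ^ 2 ∂μ ≤ c * ∫ x in s, (T v x) ^ 2 ∂μ := by
    intro s hs c v hb
    rw [← integral_const_mul]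
    refine integral_mono_ae ((Iδsq v).restrict) (((Isq v).const_mul c).restrict) ?_
    exact (ae_restrict_iff' hs).2
      (hb.mono fun x hx hxs => mul_le_mul_of_nonneg_right (hx hxs) (sq_nonneg _))
  have hlb : ∀ (s : Set X), MeasurableSet s → ∀ (c : ℝ) (v : V),
      (∀ᵐ x ∂μ, x ∈ s → c ≤ γ' x - γ x) →
      c * ∫ x in s, (T v x) ^ 2 ∂μ ≤ ∫ x in s, (γ' x - γ x) * (T v x) ^ 2 ∂μ := by
    intro s hs c v hb
    rw [← integral_const_mul]
    refine integral_mono_ae (((Isq v).const_mul c).restrict) ((Iδsq v).restrict) ?_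
    exact (ae_restrict_iff' hs).2
      (hb.mono fun x hx hxs => mul_le_mul_of_nonneg_right (hx hxs) (sq_nonneg _))
  set A := ∫ x in Γm, (T u x) ^ 2 ∂μ with hA
  set B := ∫ x in Γmᶜ, (T u x) ^ 2 ∂μ with hB
  set A' := ∫ x in Γm, (T u' x) ^ 2 ∂μ with hA'
  set B' := ∫ x in Γmᶜ, (T u' x) ^ 2 ∂μ with hB'
  have uin : ∫ x in Γm, (γ' x - γ x) * (T u x) ^ 2 ∂μ ≤ (α / 2) * A :=
    hub Γm hΓm (α / 2) u (hin.mono fun x h hx => (h hx).2)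
  have uout : ∫ x in Γmᶜ, (γ' x - γ x) * (T u x) ^ 2 ∂μ ≤ (-(α / 2)) * B :=
    hub Γmᶜ hΓm.compl (-(α / 2)) u (hout.mono fun x h hx => (h hx).2)
  have u'in : (α / 4) * A' ≤ ∫ x in Γm, (γ' x - γ x) * (T u' x) ^ 2 ∂μ :=
    hlb Γm hΓm (α / 4) u' (hin.mono fun x h hx => (h hx).1)
  have u'out : (α / 2 - β) * B' ≤ ∫ x in Γmᶜ, (γ' x - γ x) * (T u' x) ^ 2 ∂μ :=
    hlb Γmᶜ hΓm.compl (α / 2 - β) u' (hout.mono fun x h hx => (h hx).1)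
  have H : (α / 4) * A' + (α / 2 - β) * B' ≤ (α / 2) * A + (-(α / 2)) * B := by
    have h1 := split u
    have h2 := split u'
    have h3 := full_eq u
    have h4 := full_eq u'
    linarith
  -- final arithmetic
  have hco : (2 * β / α - 1) * B' * α = (2 * β - α) * B' := by
    field_simp
  have hαT : 0 ≤ α * ((A - B) - ((1 / 2) * A' - (2 * β / α - 1) * B')) := by
    nlinarith [H, hco]
  have h6 : 0 ≤ (A - B) - ((1 / 2) * A' - (2 * β / α - 1) * B') := by
    have h7 := div_nonneg hαT hα.le
    rwa [mul_div_cancel_left₀ _ hα.ne'] at h7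
  linarith
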